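/- Let f be an even integrable symbol on the unit circle with Fourier coefficients f_j. Then det(f_{j−k} − f_{j+k+2})_{j,k=0}^{n−1} = (2^{n²}/π^n) D_n^H(f(e^{iθ(x)}) √(1−x²)), where D_n^H(w) = det(∫_{−1}^1 x^{j+k} w(x) dx)_{j,k=0}^{n−1} and x = cos θ. -/

import Mathlib

open MeasureTheory

open scoped Real

/-- Fourier coefficient of a symbol `g(θ)` (standing for `g(e^{iθ})`). -/
noncomputable def circleCoeff (g : ℝ → ℂ) (j : ℤ) : ℂ :=
  (1 / (2 * (π : ℂ))) *
    ∫ θ in (0:ℝ)..(2 * π), g θ * Complex.exp (-(j * θ) * Complex.I)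

/-- Hankel determinant of a weight `w` on `[-1,1]`. -/
noncomputable def hankelDet (w : ℝ → ℂ) (n : ℕ) : ℂ :=
  Matrix.det (Matrix.of fun j k : Fin n =>
    ∫ x in (-1:ℝ)..1, (x : ℂ)^((j : ℕ) + (k : ℕ)) * w x)

open Polynomial Polynomial.Chebyshev

-- image of cos
lemma cos_image_Ioo : Real.cos '' Set.Ioo 0 π = Set.Ioo (-1) 1 := by
  ext x
  constructor
  · rintro ⟨θ, hθ, rfl⟩
    constructor
    · have := Real.strictAntiOn_cos (by constructor <;> [exact hθ.1.le; exact hθ.2.le] :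
        θ ∈ Set.Icc 0 π) (Set.right_mem_Icc.mpr Real.pi_pos.le) hθ.2
      simpa using this
    · have := Real.strictAntiOn_cos (Set.left_mem_Icc.mpr Real.pi_pos.le)
        (by constructor <;> [exact hθ.1.le; exact hθ.2.le]) hθ.1
      simpa using this
  · intro hx
    exact ⟨Real.arccos x, ⟨Real.arccos_pos.mpr hx.2, lt_of_le_of_ne (Real.arccos_le_pi x) (by simp [Real.arccos_eq_pi]; linarith [hx.1])⟩,
      Real.cos_arccos hx.1.le hx.2.le⟩

/-- substitution x = cos θ -/
lemma subst_cos (F : ℝ → ℂ) :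
    (∫ x in (-1:ℝ)..1, F x) = ∫ θ in Set.Ioo 0 π, (Real.sin θ : ℂ) * F (Real.cos θ) := by
  rw [intervalIntegral.integral_of_le (by norm_num), MeasureTheory.integral_Ioc_eq_integral_Ioo,
    ← cos_image_Ioo,
    MeasureTheory.integral_image_eq_integral_abs_deriv_smul measurableSet_Ioo
      (fun x _ => (Real.hasDerivAt_cos x).hasDerivWithinAt) (Real.injOn_cos.mono Set.Ioo_subset_Icc_self) F]
  refine setIntegral_congr_fun measurableSet_Ioo (fun θ hθ => ?_)
  rw [abs_neg, abs_of_nonneg (Real.sin_nonneg_of_nonneg_of_le_pi hθ.1.le hθ.2.le),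
    Complex.real_smul]

lemma shift_period (h : ℝ → ℂ) (hp : Function.Periodic h (2*π)) :
    (∫ θ in (0:ℝ)..(2*π), h θ) = ∫ θ in (-π)..π, h θ := by
  have := hp.intervalIntegral_add_eq 0 (-π)
  rw [zero_add, show -π + 2*π = π by ring] at this
  exact this

lemma odd_vanish (h : ℝ → ℂ) (hodd : ∀ θ, h (-θ) = - h θ) :
    (∫ θ in (-π:ℝ)..π, h θ) = 0 := by
  have h1 : (∫ θ in (-π:ℝ)..π, h (-θ)) = ∫ θ in (-π:ℝ)..π, h θ := by
    have := intervalIntegral.integral_comp_neg (a := -π) (b := π) (f := h)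
    simpa using this
  have h2 : (∫ θ in (-π:ℝ)..π, h (-θ)) = -∫ θ in (-π:ℝ)..π, h θ := by
    simp only [hodd]
    exact intervalIntegral.integral_neg
  have h3 : (∫ θ in (-π:ℝ)..π, h θ) = -∫ θ in (-π:ℝ)..π, h θ := h1.symm.trans h2
  linear_combination (h3) / 2

lemma even_double (h : ℝ → ℂ) (hev : ∀ θ, h (-θ) = h θ)
    (hi : IntervalIntegrable h volume 0 π) (hi' : IntervalIntegrable h volume (-π) 0) :
    (∫ θ in (-π:ℝ)..π, h θ) = 2 * ∫ θ in (0:ℝ)..π, h θ := by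
  rw [← intervalIntegral.integral_add_adjacent_intervals hi' hi]
  have h1 : (∫ θ in (-π:ℝ)..0, h θ) = ∫ θ in (0:ℝ)..π, h θ := by
    have := intervalIntegral.integral_comp_neg (a := 0) (b := π) (f := h)
    rw [neg_zero] at this
    rw [← this]
    simp only [hev]
  rw [h1]; ring


section
variable (g : ℝ → ℂ)
  (hint : IntervalIntegrable g MeasureTheory.volume 0 (2 * π))
  (heven : ∀ θ, g (-θ) = g θ) (hper : Function.Periodic g (2 * π))

include hint in
omit hper in
lemma g_int_sub (a b : ℝ) (h1 : Set.uIcc a b ⊆ Set.uIcc 0 (2*π)) :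
    IntervalIntegrable g volume a b := hint.mono_set h1

include hint hper in
lemma g_int_neg : IntervalIntegrable g volume (-π) 0 := by
  have h1 : IntervalIntegrable g volume π (2*π) := by
    apply hint.mono_set
    apply Set.uIcc_subset_uIcc <;> rw [Set.mem_uIcc] <;> constructor <;> constructor
      <;> linarith [Real.pi_pos]
  have h2 := h1.comp_add_right (2*π)
  have : (fun x => g (x + 2*π)) = g := funext fun x => hper x
  rw [this, show π - 2*π = -π by ring, show 2*π - 2*π = (0:ℝ) by ring] at h2
  exact h2

-- integrability of g times a continuous function
omit hint hper in
lemma g_mul_cont (c : ℝ → ℂ) (hc : Continuous c) (a b : ℝ)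
    (hab : IntervalIntegrable g volume a b) :
    IntervalIntegrable (fun θ => g θ * c θ) volume a b :=
  hab.mul_continuousOn hc.continuousOn

-- the key pointwise exponential identity
lemma exp_diff_eq (j k : ℕ) (θ : ℝ) :
    Complex.exp (-(((j:ℤ) - (k:ℤ) : ℤ) * θ) * Complex.I)
      - Complex.exp (-(((j:ℤ) + (k:ℤ) + 2 : ℤ) * θ) * Complex.I)
    = 2 * Complex.sin (((j:ℂ)+1) * θ) * Complex.sin (((k:ℂ)+1) * θ)
      - (Complex.sin ((((j:ℤ) - (k:ℤ) : ℤ) : ℂ) * θ)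
          - Complex.sin ((((j:ℤ) + (k:ℤ) + 2 : ℤ) : ℂ) * θ)) * Complex.I := by
  set a : ℂ := (((j:ℤ) - (k:ℤ) : ℤ) : ℂ)
  set b : ℂ := (((j:ℤ) + (k:ℤ) + 2 : ℤ) : ℂ)
  have h1 : (-(a * θ) * Complex.I) = (-(a*θ)) * Complex.I := rfl
  rw [show (-(a * θ) * Complex.I) = (-(a*θ)) * Complex.I from rfl,
      show (-(b * θ) * Complex.I) = (-(b*θ)) * Complex.I from rfl,
      Complex.exp_mul_I, Complex.exp_mul_I, Complex.cos_neg, Complex.sin_neg,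
      Complex.cos_neg, Complex.sin_neg]
  have h2 := Complex.cos_sub_cos (a*θ) (b*θ)
  have ha : (a*θ + b*θ)/2 = ((j:ℂ)+1)*θ := by
    simp only [a, b]; push_cast; ring
  have hb : (a*θ - b*θ)/2 = -(((k:ℂ)+1)*θ) := by
    simp only [a, b]; push_cast; ring
  rw [ha, hb, Complex.sin_neg] at h2
  linear_combination h2
end

section
variable (g : ℝ → ℂ)
  (hint : IntervalIntegrable g MeasureTheory.volume 0 (2 * π))
  (heven : ∀ θ, g (-θ) = g θ) (hper : Function.Periodic g (2 * π))

lemma per_sin (c : ℤ) : Function.Periodic (fun θ:ℝ => Complex.sin ((c:ℂ)*θ)) (2*π) := by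
  intro θ
  simp only
  have h := Complex.sin_add_int_mul_two_pi ((c:ℂ)*θ) c
  rw [show ((c:ℂ) * ((θ + 2*π : ℝ) : ℂ)) = (c:ℂ)*θ + c * (2*π) by push_cast; ring]
  exact h

lemma odd_sin_mul (c : ℤ) (θ : ℝ) :
    Complex.sin ((c:ℂ) * ((-θ : ℝ):ℂ)) = - Complex.sin ((c:ℂ)*θ) := by
  rw [show ((c:ℂ) * ((-θ : ℝ):ℂ)) = -((c:ℂ)*θ) by push_cast; ring, Complex.sin_neg]

include hint heven hper in
lemma entry_formula (j k : ℕ) :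
    circleCoeff g ((j:ℤ) - (k:ℤ)) - circleCoeff g ((j:ℤ) + (k:ℤ) + 2)
    = (2/(π:ℂ)) * ∫ θ in (0:ℝ)..π,
        g θ * (Complex.sin (((j:ℂ)+1)*θ) * Complex.sin (((k:ℂ)+1)*θ)) := by
  set a : ℤ := (j:ℤ) - (k:ℤ) with ha
  set b : ℤ := (j:ℤ) + (k:ℤ) + 2 with hb
  have hca : ∀ c : ℤ, Continuous fun θ:ℝ => Complex.exp (-((c:ℂ) * θ) * Complex.I) := by
    intro c; fun_prop
  have hcs : ∀ c : ℤ, Continuous fun θ:ℝ => Complex.sin ((c:ℂ) * θ) := by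
    intro c; fun_prop
  have hcss : Continuous fun θ:ℝ =>
      Complex.sin (((j:ℂ)+1)*θ) * Complex.sin (((k:ℂ)+1)*θ) := by fun_prop
  have int1 := g_mul_cont g _ (hca a) 0 (2*π) hint
  have int2 := g_mul_cont g _ (hca b) 0 (2*π) hint
  -- step 1
  have step1 : circleCoeff g a - circleCoeff g b
      = (1/(2*(π:ℂ))) * ∫ θ in (0:ℝ)..(2*π),
          g θ * (Complex.exp (-((a:ℂ) * θ) * Complex.I)
            - Complex.exp (-((b:ℂ) * θ) * Complex.I)) := by
    unfold circleCoeff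
    rw [← mul_sub, ← intervalIntegral.integral_sub int1 int2]
    congr 1
    apply intervalIntegral.integral_congr
    intro θ _
    simp [mul_sub]
  -- step 2 : pointwise rewrite and split
  have int_ss : ∀ x y : ℝ, IntervalIntegrable
      (fun θ => g θ * (Complex.sin (((j:ℂ)+1)*θ) * Complex.sin (((k:ℂ)+1)*θ))) volume x y →
      True := fun _ _ _ => trivial
  have gss_int : ∀ {x y : ℝ}, IntervalIntegrable g volume x y → IntervalIntegrable
      (fun θ => g θ * (Complex.sin (((j:ℂ)+1)*θ) * Complex.sin (((k:ℂ)+1)*θ))) volume x y :=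
    fun h => g_mul_cont g _ hcss _ _ h
  have gs_int : ∀ (c : ℤ) {x y : ℝ}, IntervalIntegrable g volume x y → IntervalIntegrable
      (fun θ => g θ * Complex.sin ((c:ℂ)*θ)) volume x y :=
    fun c _ _ h => g_mul_cont g _ (hcs c) _ _ h
  have step2 : (∫ θ in (0:ℝ)..(2*π),
          g θ * (Complex.exp (-((a:ℂ) * θ) * Complex.I)
            - Complex.exp (-((b:ℂ) * θ) * Complex.I)))
      = 2 * (∫ θ in (0:ℝ)..(2*π),
            g θ * (Complex.sin (((j:ℂ)+1)*θ) * Complex.sin (((k:ℂ)+1)*θ)))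
        - ((∫ θ in (0:ℝ)..(2*π), g θ * Complex.sin ((a:ℂ)*θ))
            - ∫ θ in (0:ℝ)..(2*π), g θ * Complex.sin ((b:ℂ)*θ)) * Complex.I := by
    rw [← intervalIntegral.integral_const_mul, ← intervalIntegral.integral_sub (gs_int a hint) (gs_int b hint),
        ← intervalIntegral.integral_mul_const,
        ← intervalIntegral.integral_sub]
    · apply intervalIntegral.integral_congr
      intro θ _
      simp only
      rw [exp_diff_eq j k θ]
      ring
    · exact (gss_int hint).const_mul 2
    · exact ((gs_int a hint).sub (gs_int b hint)).mul_const _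
  -- step 3 : shifts to symmetric interval
  have g0pi : IntervalIntegrable g volume 0 π := by
    apply g_int_sub g hint
    apply Set.uIcc_subset_uIcc <;> rw [Set.mem_uIcc] <;> constructor <;> constructor
      <;> linarith [Real.pi_pos]
  have gneg : IntervalIntegrable g volume (-π) 0 := g_int_neg g hint hper
  have pershift : ∀ c : ℤ, (∫ θ in (0:ℝ)..(2*π), g θ * Complex.sin ((c:ℂ)*θ))
      = ∫ θ in (-π:ℝ)..π, g θ * Complex.sin ((c:ℂ)*θ) := by
    intro c
    exact shift_period _ (hper.mul (per_sin c))
  have oddv : ∀ c : ℤ, (∫ θ in (-π:ℝ)..π, g θ * Complex.sin ((c:ℂ)*θ)) = 0 := by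
    intro c
    apply odd_vanish
    intro θ
    rw [heven θ, odd_sin_mul]
    ring
  have perj : Function.Periodic (fun θ:ℝ => Complex.sin (((j:ℂ)+1)*θ)) (2*π) := by
    have h1 := per_sin ((j:ℤ)+1)
    rw [show (((j:ℤ)+1 : ℤ):ℂ) = (j:ℂ)+1 by push_cast; ring] at h1
    exact h1
  have perk : Function.Periodic (fun θ:ℝ => Complex.sin (((k:ℂ)+1)*θ)) (2*π) := by
    have h2 := per_sin ((k:ℤ)+1)
    rw [show (((k:ℤ)+1 : ℤ):ℂ) = (k:ℂ)+1 by push_cast; ring] at h2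
    exact h2
  have perss : Function.Periodic
      (fun θ:ℝ => g θ * (Complex.sin (((j:ℂ)+1)*θ) * Complex.sin (((k:ℂ)+1)*θ))) (2*π) :=
    hper.mul (perj.mul perk)
  have stepss : (∫ θ in (0:ℝ)..(2*π),
        g θ * (Complex.sin (((j:ℂ)+1)*θ) * Complex.sin (((k:ℂ)+1)*θ)))
      = 2 * ∫ θ in (0:ℝ)..π,
          g θ * (Complex.sin (((j:ℂ)+1)*θ) * Complex.sin (((k:ℂ)+1)*θ)) := by
    rw [shift_period _ perss]
    apply even_double _ _ (gss_int g0pi) (gss_int gneg)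
    intro θ
    rw [heven θ, show (((-θ:ℝ)):ℂ) = -(θ:ℂ) by push_cast; ring]
    rw [show (((j:ℂ)+1)*(-(θ:ℂ))) = -(((j:ℂ)+1)*θ) by ring,
        show (((k:ℂ)+1)*(-(θ:ℂ))) = -(((k:ℂ)+1)*θ) by ring,
        Complex.sin_neg, Complex.sin_neg]
    ring
  rw [step1, step2, pershift a, pershift b, oddv a, oddv b, stepss]
  have hpi : (π:ℂ) ≠ 0 := Complex.ofReal_ne_zero.mpr Real.pi_ne_zero
  field_simp
  simp only [mul_comm _ ((k:ℂ)+1)]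
  ring
end

lemma U_coeff_aux (n : ℕ) :
    ((U ℂ n).coeff n = 2 ^ n) ∧ ∀ k, n < k → (U ℂ n).coeff k = 0 := by
  induction n using Nat.strong_induction_on with
  | _ n ih =>
    match n with
    | 0 => constructor
           · simp [U_zero]
           · intro k hk; simp only [Nat.cast_zero, U_zero, Polynomial.coeff_one]
             rw [if_neg (by omega)]
    | 1 => constructor
           · simp [U_one, Polynomial.coeff_X_mul]
           · intro k hk
             simp only [Nat.cast_one, U_one, Polynomial.coeff_ofNat_mul, Polynomial.coeff_X]
             rw [if_neg (by omega)]; ring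
    | (m+2) =>
      have h1 := ih (m+1) (by omega)
      have h0 := ih m (by omega)
      have hrec : U ℂ ((m:ℕ)+2 : ℤ) = 2 * X * U ℂ ((m+1 : ℕ) : ℤ) - U ℂ ((m : ℕ) : ℤ) := by
        rw [U_add_two]; push_cast; ring_nf
      have hcast : ((m+2 : ℕ) : ℤ) = ((m:ℕ) : ℤ) + 2 := by push_cast; ring
      rw [hcast, hrec]
      constructor
      · rw [Polynomial.coeff_sub, h0.2 _ (by omega)]
        have : (2 * X * U ℂ ((m+1:ℕ):ℤ)).coeff (m+2) = 2 * (U ℂ ((m+1:ℕ):ℤ)).coeff (m+1) := by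
          rw [mul_assoc, Polynomial.coeff_ofNat_mul, Polynomial.coeff_X_mul]
        rw [this, h1.1]; ring
      · intro k hk
        rw [Polynomial.coeff_sub, h0.2 _ (by omega)]
        rcases Nat.exists_eq_add_of_lt (show 0 < k by omega) with ⟨k', rfl⟩
        have : (2 * X * U ℂ ((m+1:ℕ):ℤ)).coeff (0+k'+1) = 2 * (U ℂ ((m+1:ℕ):ℤ)).coeff (k') := by
          rw [mul_assoc, Polynomial.coeff_ofNat_mul, Polynomial.coeff_X_mul]; norm_num
        rw [this, h1.2 _ (by omega)]; ring


lemma U_natDegree_le (n : ℕ) : (U ℂ n).natDegree ≤ n :=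
  Polynomial.natDegree_le_iff_coeff_eq_zero.mpr (U_coeff_aux n).2

section
variable (g : ℝ → ℂ)
  (hint : IntervalIntegrable g MeasureTheory.volume 0 (2 * π))
  (heven : ∀ θ, g (-θ) = g θ) (hper : Function.Periodic g (2 * π))

omit hint heven hper in
include heven in
lemma theta_to_x (j k : ℕ) :
    (∫ θ in (0:ℝ)..π, g θ * (Complex.sin (((j:ℂ)+1)*θ) * Complex.sin (((k:ℂ)+1)*θ)))
    = ∫ x in (-1:ℝ)..1, (U ℂ j).eval (x:ℂ) * (U ℂ k).eval (x:ℂ) *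
        (g (Real.arccos x) * (Real.sqrt (1 - x^2) : ℂ)) := by
  rw [subst_cos]
  rw [intervalIntegral.integral_of_le Real.pi_pos.le, MeasureTheory.integral_Ioc_eq_integral_Ioo]
  refine MeasureTheory.setIntegral_congr_fun measurableSet_Ioo (fun θ hθ => ?_)
  have e1 := U_complex_cos (θ:ℂ) (j:ℤ)
  have e2 := U_complex_cos (θ:ℂ) (k:ℤ)
  push_cast at e1 e2
  rw [Real.arccos_cos hθ.1.le hθ.2.le,
    show Real.sqrt (1 - Real.cos θ^2) = Real.sin θ from
      (Real.sin_eq_sqrt_one_sub_cos_sq hθ.1.le hθ.2.le).symm,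
    Complex.ofReal_cos, Complex.ofReal_sin]
  linear_combination (-(Polynomial.eval (Complex.cos (θ:ℂ)) (U ℂ (k:ℤ)) * Complex.sin (θ:ℂ) * g θ)) * e1
    - (Complex.sin (((j:ℂ)+1) * θ) * g θ) * e2
end

section matrixpart
variable (w : ℝ → ℂ) (n : ℕ)
  (hmomw : ∀ m : ℕ, IntervalIntegrable (fun x : ℝ => (x : ℂ)^m * w x)
    MeasureTheory.volume (-1) 1)

/-- coefficient matrix of Chebyshev U -/
noncomputable def Lmat (n : ℕ) : Matrix (Fin n) (Fin n) ℂ :=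
  Matrix.of fun j k : Fin n => (U ℂ (j:ℕ)).coeff (k:ℕ)

lemma Lmat_det : (Lmat n).det = 2 ^ (∑ j ∈ Finset.range n, j) := by
  rw [Matrix.det_of_lowerTriangular (Lmat n)
    (fun i j h => (U_coeff_aux (i:ℕ)).2 (j:ℕ) (by exact h))]
  rw [show (2:ℂ) ^ (∑ j ∈ Finset.range n, j) = ∏ j ∈ Finset.range n, 2^j by
    rw [← Finset.prod_pow_eq_pow_sum], ← Fin.prod_univ_eq_prod_range]
  exact Finset.prod_congr rfl (fun j _ => (U_coeff_aux (j:ℕ)).1)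

include hmomw in
lemma A_factor :
    (Matrix.of fun j k : Fin n =>
      ∫ x in (-1:ℝ)..1, (U ℂ (j:ℕ)).eval (x:ℂ) * (U ℂ (k:ℕ)).eval (x:ℂ) * w x)
    = Lmat n * (Matrix.of fun j k : Fin n =>
        ∫ x in (-1:ℝ)..1, (x : ℂ)^((j : ℕ) + (k : ℕ)) * w x) * (Lmat n).transpose := by
  ext j k
  have expand : ∀ x : ℝ, (U ℂ (j:ℕ)).eval (x:ℂ) * (U ℂ (k:ℕ)).eval (x:ℂ) * w x
      = ∑ p : Fin n × Fin n,
          ((U ℂ (j:ℕ)).coeff (p.1:ℕ) * (U ℂ (k:ℕ)).coeff (p.2:ℕ))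
            * ((x:ℂ)^((p.1:ℕ)+(p.2:ℕ)) * w x) := by
    intro x
    rw [Polynomial.eval_eq_sum_range' (lt_of_le_of_lt (U_natDegree_le j) j.isLt),
        Polynomial.eval_eq_sum_range' (lt_of_le_of_lt (U_natDegree_le k) k.isLt),
        Finset.sum_range, Finset.sum_range, Finset.sum_mul_sum, ← Finset.sum_product',
        Finset.univ_product_univ, Finset.sum_mul]
    refine Finset.sum_congr rfl (fun p _ => ?_)
    rw [pow_add]; ring
  have intab : ∀ p : Fin n × Fin n, IntervalIntegrable
      (fun x : ℝ => ((U ℂ (j:ℕ)).coeff (p.1:ℕ) * (U ℂ (k:ℕ)).coeff (p.2:ℕ))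
        * ((x:ℂ)^((p.1:ℕ)+(p.2:ℕ)) * w x))
      volume (-1) 1 := fun p => (hmomw _).const_mul _
  have step : (∫ x in (-1:ℝ)..1, (U ℂ (j:ℕ)).eval (x:ℂ) * (U ℂ (k:ℕ)).eval (x:ℂ) * w x)
      = ∑ p : Fin n × Fin n,
          ((U ℂ (j:ℕ)).coeff (p.1:ℕ) * (U ℂ (k:ℕ)).coeff (p.2:ℕ))
            * ∫ x in (-1:ℝ)..1, (x:ℂ)^((p.1:ℕ)+(p.2:ℕ)) * w x := by
    rw [intervalIntegral.integral_congr (fun x _ => expand x),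
        intervalIntegral.integral_finset_sum (fun p _ => intab p)]
    exact Finset.sum_congr rfl (fun p _ => intervalIntegral.integral_const_mul _ _)
  simp only [Matrix.of_apply] at step ⊢
  rw [step, Matrix.mul_apply]
  simp_rw [Matrix.mul_apply, Matrix.transpose_apply, Finset.sum_mul]
  rw [Fintype.sum_prod_type, Finset.sum_comm]
  refine Finset.sum_congr rfl (fun b _ => Finset.sum_congr rfl (fun a _ => ?_))
  simp only [Lmat, Matrix.of_apply]
  ring
end matrixpart

/-- Toeplitz+Hankel identity:
`det(f_{j-k} - f_{j+k+2}) = (2^{n²}/πⁿ) D_n^H(f(e^{iθ(x)})√(1-x²))`. -/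
theorem toeplitz_plus_hankel_type2 (g : ℝ → ℂ)
    (hint : IntervalIntegrable g MeasureTheory.volume 0 (2 * π))
    (heven : ∀ θ, g (-θ) = g θ) (hper : Function.Periodic g (2 * π))
    (hmom : ∀ m : ℕ, IntervalIntegrable
      (fun x : ℝ => (x : ℂ)^m * (g (Real.arccos x) * (Real.sqrt (1 - x^2) : ℂ)))
      MeasureTheory.volume (-1) 1)
    (n : ℕ) :
    Matrix.det (Matrix.of fun j k : Fin n =>
        circleCoeff g ((j : ℤ) - (k : ℤ)) - circleCoeff g ((j : ℤ) + (k : ℤ) + 2))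
      = ((2 : ℂ)^((n : ℤ)^2) / (π : ℂ)^n) *
          hankelDet (fun x => g (Real.arccos x) * (Real.sqrt (1 - x^2) : ℂ)) n := by
  classical
  set w : ℝ → ℂ := fun x => g (Real.arccos x) * (Real.sqrt (1 - x^2) : ℂ) with hw
  have hM : (Matrix.of fun j k : Fin n =>
      circleCoeff g ((j : ℤ) - (k : ℤ)) - circleCoeff g ((j : ℤ) + (k : ℤ) + 2))
    = ((2:ℂ)/(π:ℂ)) • (Matrix.of fun j k : Fin n =>
        ∫ x in (-1:ℝ)..1, (U ℂ ((j:ℕ))).eval (x:ℂ) * (U ℂ ((k:ℕ))).eval (x:ℂ) * w x) := by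
    ext j k
    simp only [Matrix.smul_apply, Matrix.of_apply, smul_eq_mul]
    rw [entry_formula g hint heven hper (j:ℕ) (k:ℕ), theta_to_x g heven (j:ℕ) (k:ℕ)]
  rw [hM, Matrix.det_smul, A_factor w n hmom, Matrix.det_mul, Matrix.det_mul,
    Matrix.det_transpose, Lmat_det, hankelDet, Fintype.card_fin]
  set S := ∑ j ∈ Finset.range n, j with hSdef
  set D := (Matrix.of fun j k : Fin n =>
      ∫ x in (-1:ℝ)..1, (x : ℂ)^((j : ℕ) + (k : ℕ)) * w x).det with hD
  have hS : S * 2 = n * (n-1) := Finset.sum_range_id_mul_two n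
  have hn1 : n * (n-1) + n = n^2 := by
    cases n with
    | zero => simp
    | succ m => simp [Nat.succ_sub_one]; ring
  have hn2 : n^2 = S + S + n := by omega
  have hz : (2:ℂ)^((n:ℤ)^2) = (2:ℂ)^(n^2 : ℕ) := by
    rw [show ((n:ℤ)^2) = ((n^2:ℕ):ℤ) by push_cast; ring, zpow_natCast]
  rw [hz, hn2, pow_add, pow_add, div_pow]
  have hpi : (π:ℂ)^n ≠ 0 := pow_ne_zero _ (Complex.ofReal_ne_zero.mpr Real.pi_ne_zero)
  field_simp
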